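/- The affine energy function H(b₁(m) ⊗ b₂(n)) = m - n - h(b₁ ⊗ b₂) is invariant under all Kashiwara operators: H(ẽ_i(b₁(m) ⊗ b₂(n))) = H(b₁(m) ⊗ b₂(n)) for i ∈ {0,1}, whenever ẽ_i(b₁(m) ⊗ b₂(n)) ≠ 0. -/

import Mathlib

set_option maxHeartbeats 4000000


def inBad (l : ℤ) (b : ℤ × ℤ) : Prop := 0 ≤ b.1 ∧ 0 ≤ b.2 ∧ b.1 + b.2 ≤ l

def eps0 (l : ℤ) (b : ℤ × ℤ) : ℤ := l - 2 * b.2 + |b.1 - b.2|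
def phi0 (l : ℤ) (b : ℤ × ℤ) : ℤ := l - 2 * b.1 + |b.1 - b.2|

def e0 (l : ℤ) (b : ℤ × ℤ) : Option (ℤ × ℤ) :=
  if b.2 < b.1 then some (b.1 - 1, b.2)
  else if b.1 ≤ b.2 ∧ b.1 + (b.2 + 1) ≤ l then some (b.1, b.2 + 1)
  else none

def e1 (l : ℤ) (b : ℤ × ℤ) : Option (ℤ × ℤ) :=
  if 1 ≤ b.2 then some (b.1 + 1, b.2 - 1) else none

/-- `ẽ₀` on the affinization raises the degree by 1 -/
def e0Aff (l : ℤ) (p : (ℤ × ℤ) × ℤ) : Option ((ℤ × ℤ) × ℤ) :=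
  (e0 l p.1).map (fun b => (b, p.2 + 1))

/-- `ẽ₁` on the affinization preserves the degree -/
def e1Aff (l : ℤ) (p : (ℤ × ℤ) × ℤ) : Option ((ℤ × ℤ) × ℤ) :=
  (e1 l p.1).map (fun b => (b, p.2))

/-- `ẽ₀` on a tensor product of affinized elements -/
def e0TensorAff (l : ℤ) (p₁ p₂ : (ℤ × ℤ) × ℤ) : Option (((ℤ × ℤ) × ℤ) × ((ℤ × ℤ) × ℤ)) :=
  if phi0 l p₁.1 ≥ eps0 l p₂.1 then (e0Aff l p₁).map (fun p => (p, p₂))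
  else (e0Aff l p₂).map (fun p => (p₁, p))

/-- `ẽ₁` on a tensor product of affinized elements (`φ₁(x,y) = x`, `ε₁(x,y) = y`) -/
def e1TensorAff (l : ℤ) (p₁ p₂ : (ℤ × ℤ) × ℤ) : Option (((ℤ × ℤ) × ℤ) × ((ℤ × ℤ) × ℤ)) :=
  if p₁.1.1 ≥ p₂.1.2 then (e1Aff l p₁).map (fun p => (p, p₂))
  else (e1Aff l p₂).map (fun p => (p₁, p))

def hEnergy (b₁ b₂ : ℤ × ℤ) : ℤ :=
  max (max ((b₁.1 + b₁.2) - (b₂.1 + b₂.2)) ((b₂.1 + b₂.2) - (b₁.1 + b₁.2)))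
      (max ((b₂.1 + b₂.2) + (b₁.2 - 3 * b₁.1)) ((b₁.1 + b₁.2) + (b₂.1 - 3 * b₂.2)))

/-- affine energy function: `H(b₁(m) ⊗ b₂(n)) = m - n - h(b₁ ⊗ b₂)`
(here the stored integer is the degree itself) -/
def Haff (p₁ p₂ : (ℤ × ℤ) × ℤ) : ℤ := p₁.2 - p₂.2 - hEnergy p₁.1 p₂.1

/-- the affine energy function is invariant under `ẽ₀` and `ẽ₁`. -/
theorem Haff_invariant (l : ℤ) (hl : 0 < l) (b₁ b₂ : ℤ × ℤ) (m n : ℤ)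
    (h₁ : inBad l b₁) (h₂ : inBad l b₂) :
    (∀ q, e0TensorAff l (b₁, m) (b₂, n) = some q → Haff q.1 q.2 = Haff (b₁, m) (b₂, n)) ∧
    (∀ q, e1TensorAff l (b₁, m) (b₂, n) = some q → Haff q.1 q.2 = Haff (b₁, m) (b₂, n)) := by
  obtain ⟨x₁, y₁⟩ := b₁
  obtain ⟨x₂, y₂⟩ := b₂
  obtain ⟨a1, b1, c1⟩ := h₁
  obtain ⟨a2, b2, c2⟩ := h₂
  simp only at a1 b1 c1 a2 b2 c2
  constructor <;> intro q hq <;>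
    simp only [e0TensorAff, e1TensorAff, e0Aff, e1Aff, e0, e1, phi0, eps0,
      abs_eq_max_neg, max_def] at hq <;>
    split_ifs at hq <;>
    simp only [Option.map_some, Option.map_none, Option.some.injEq,
      reduceCtorEq] at hq <;>
    (try exact absurd hq (by simp)) <;>
    subst hq <;>
    simp only [Haff, hEnergy, max_def] <;>
    split_ifs <;>
    omega
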